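/- Let R be a commutative ring and let M, N be finite free R-modules of ranks m and n respectively. Then there is an isomorphism of R-modules Λ^{mn}(M ⊗ N) ≅ (Λ^m M)^{⊗ n} ⊗ (Λ^n N)^{⊗ m} (top exterior power of a tensor product). In particular, for the determinant line: det(M ⊗ N) ≅ (det M)^{⊗ rk N} ⊗ (det N)^{⊗ rk M}. -/

import Mathlib

open TensorProduct

section Aux

variable {R : Type*} [CommRing R] {M : Type*} [AddCommGroup M] [Module R M]

/-- Any alternating map in `r = rank` arguments is determined by its value on a basis. -/
private lemma alt_eq_det_smul {r : ℕ} (b : Module.Basis (Fin r) R M) {N : Type*} [AddCommGroup N]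
    [Module R N] (f : M [⋀^Fin r]→ₗ[R] N) (v : Fin r → M) : f v = b.det v • f ⇑b := by
  have h : f = (LinearMap.toSpanSingleton R N (f ⇑b)).compAlternatingMap b.det := by
    apply Module.Basis.ext_alternating b
    intro v hv
    have hbij : Function.Bijective v := Finite.injective_iff_bijective.mp hv
    set σ := Equiv.ofBijective v hbij with hσ
    have hveq : (fun i => b (v i)) = ⇑b ∘ σ := rfl
    rw [hveq, AlternatingMap.map_perm, LinearMap.compAlternatingMap_apply,
      AlternatingMap.map_perm, Module.Basis.det_self, LinearMap.toSpanSingleton_apply,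
      Units.smul_def, Units.smul_def, smul_assoc, one_smul]
  conv_lhs => rw [h]
  rw [LinearMap.compAlternatingMap_apply, LinearMap.toSpanSingleton_apply]

/-- The top exterior power of a free module of rank `r` is free of rank one. -/
private noncomputable def topExtPowerEquiv {r : ℕ} (b : Module.Basis (Fin r) R M) :
    (⋀[R]^r M) ≃ₗ[R] R := by
  classical
  set F : ∀ i, M [⋀^Fin i]→ₗ[R] R :=
    Function.update (fun i => (0 : M [⋀^Fin i]→ₗ[R] R)) r b.det with hF
  have hFr : F r = b.det := Function.update_self _ _ _
  set φ : ExteriorAlgebra R M →ₗ[R] R := ExteriorAlgebra.liftAlternating F with hφ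
  have hφι : ∀ v : Fin r → M, φ (ExteriorAlgebra.ιMulti R r v) = b.det v := by
    intro v
    rw [hφ, ExteriorAlgebra.liftAlternating_apply_ιMulti, hFr]
  set e : ExteriorAlgebra R M := ExteriorAlgebra.ιMulti R r ⇑b with he
  have hemem : e ∈ ⋀[R]^r M := ExteriorAlgebra.ιMulti_range R r (Set.mem_range_self _)
  have hφe : φ e = 1 := by rw [he, hφι, Module.Basis.det_self]
  -- key : every element of the top exterior power is `φ x • e`
  have key : ∀ x ∈ ⋀[R]^r M, x = φ x • e := by
    have hker : (⋀[R]^r M : Submodule R (ExteriorAlgebra R M)) ≤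
        LinearMap.ker (LinearMap.id - (LinearMap.toSpanSingleton R _ e) ∘ₗ φ) := by
      rw [← ExteriorAlgebra.ιMulti_span_fixedDegree, Submodule.span_le]
      rintro _ ⟨v, rfl⟩
      simp only [SetLike.mem_coe, LinearMap.mem_ker, LinearMap.sub_apply, LinearMap.id_apply,
        LinearMap.comp_apply, LinearMap.toSpanSingleton_apply, hφι]
      rw [alt_eq_det_smul b (ExteriorAlgebra.ιMulti R r) v, ← he, sub_self]
    intro x hx
    have := hker hx
    rw [LinearMap.mem_ker, LinearMap.sub_apply, LinearMap.id_apply, LinearMap.comp_apply,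
      LinearMap.toSpanSingleton_apply, sub_eq_zero] at this
    exact this
  refine LinearEquiv.ofLinear (φ ∘ₗ (⋀[R]^r M).subtype)
    (LinearMap.toSpanSingleton R _ (⟨e, hemem⟩ : ⋀[R]^r M)) ?_ ?_
  · ext
    simp only [LinearMap.comp_apply, LinearMap.toSpanSingleton_apply, Submodule.coe_smul,
      Submodule.subtype_apply, map_smul, LinearMap.id_apply]
    rw [hφe, smul_eq_mul, mul_one]
  · refine LinearMap.ext fun x => Subtype.ext ?_
    simp only [LinearMap.comp_apply, LinearMap.toSpanSingleton_apply, Submodule.subtype_apply,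
      LinearMap.id_apply, Submodule.coe_smul]
    exact (key (x : ExteriorAlgebra R M) x.2).symm

end Aux

/-- Determinant of a tensor product: for finite free modules `M`, `N` of ranks `m`, `n`
over a commutative ring, `Λ^{mn}(M ⊗ N) ≅ (Λ^m M)^{⊗n} ⊗ (Λ^n N)^{⊗m}`. -/
theorem det_of_tensor_product_of_free_modules
    (R : Type*) [CommRing R]
    (M N : Type*) [AddCommGroup M] [Module R M] [AddCommGroup N] [Module R N]
    [Module.Free R M] [Module.Finite R M] [Module.Free R N] [Module.Finite R N]
    (m n : ℕ) (hm : Module.finrank R M = m) (hn : Module.finrank R N = n) :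
    Nonempty ((⋀[R]^(m * n) (M ⊗[R] N)) ≃ₗ[R]
      (TensorPower R n (⋀[R]^m M)) ⊗[R] (TensorPower R m (⋀[R]^n N))) := by
  classical
  rcases subsingleton_or_nontrivial R with hR | hR
  · haveI h1 : Subsingleton (⋀[R]^(m * n) (M ⊗[R] N)) := Module.subsingleton R _
    haveI h2 : Subsingleton
        ((TensorPower R n (⋀[R]^m M)) ⊗[R] (TensorPower R m (⋀[R]^n N))) :=
      Module.subsingleton R _
    exact ⟨LinearEquiv.ofLinear 0 0 (Subsingleton.elim _ _) (Subsingleton.elim _ _)⟩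
  let bM : Module.Basis (Fin m) R M := Module.finBasisOfFinrankEq R M hm
  let bN : Module.Basis (Fin n) R N := Module.finBasisOfFinrankEq R N hn
  let bMN : Module.Basis (Fin (m * n)) R (M ⊗[R] N) := (bM.tensorProduct bN).reindex finProdFinEquiv
  let eL : (⋀[R]^(m * n) (M ⊗[R] N)) ≃ₗ[R] R := topExtPowerEquiv bMN
  let e1 : (⋀[R]^m M) ≃ₗ[R] R := topExtPowerEquiv bM
  let e2 : (⋀[R]^n N) ≃ₗ[R] R := topExtPowerEquiv bN
  let t1 : TensorPower R n (⋀[R]^m M) ≃ₗ[R] R :=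
    (PiTensorProduct.congr fun _ => e1).trans
      (PiTensorProduct.constantBaseRingEquiv (Fin n) R).toLinearEquiv
  let t2 : TensorPower R m (⋀[R]^n N) ≃ₗ[R] R :=
    (PiTensorProduct.congr fun _ => e2).trans
      (PiTensorProduct.constantBaseRingEquiv (Fin m) R).toLinearEquiv
  exact ⟨eL.trans ((TensorProduct.congr t1 t2).trans (TensorProduct.lid R R)).symm⟩
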